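/- Under the hypotheses of the contraction estimate for the Picard map 𝒢 on C_δ (exponential bound ‖e^{At}‖ ≤ K e^{-κt}, Lipschitz constants L_F, L_G on the δ-ball, and contraction condition (K/κ)(L_F + L_G) ≤ a < 1), if additionally (K/κ)(sup_t ‖G(0,t)‖ + ‖F‖_{∞,δ}) + (K/κ)·2δ(L_F + L_G) ≤ δ, then 𝒢 maps C_δ into itself and hence has a unique fixed point z* ∈ C_δ, a uniformly bounded solution of ż = Az + F(z) + G(z,t). -/

import Mathlib

open MeasureTheory
set_option maxHeartbeats 1000000

lemma expAux {κ : ℝ} (hκ : 0 < κ) (t : ℝ) :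
    IntegrableOn (fun s => Real.exp (κ * (s - t))) (Set.Iic t) ∧
    (∫ s in Set.Iic t, Real.exp (κ * (s - t))) = 1 / κ := by
  have hcont : Continuous fun s : ℝ => Real.exp (κ * (s - t)) := by continuity
  have hderiv : ∀ s : ℝ, HasDerivAt (fun u => Real.exp (κ * (u - t)) / κ)
      (Real.exp (κ * (s - t))) s := by
    intro s
    have h1 : HasDerivAt (fun u : ℝ => κ * (u - t)) κ s := by
      simpa using (((hasDerivAt_id s).sub_const t).const_mul κ)
    have h2 := ((Real.hasDerivAt_exp (κ * (s - t))).comp s h1).div_const κ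
    simpa [mul_div_assoc, mul_div_cancel_right₀ _ hκ.ne'] using h2
  have hint : ∀ y : ℝ, (∫ s in y..t, Real.exp (κ * (s - t))) =
      1 / κ - Real.exp (κ * (y - t)) / κ := by
    intro y
    rw [intervalIntegral.integral_eq_sub_of_hasDerivAt (fun s _ => hderiv s)
      (hcont.intervalIntegrable y t)]
    simp [sub_self, one_div]
  have hIntOn : IntegrableOn (fun s => Real.exp (κ * (s - t))) (Set.Iic t) := by
    refine integrableOn_Iic_of_intervalIntegral_norm_bounded (1 / κ) t
      (fun y => (hcont.intervalIntegrable y t).1) Filter.tendsto_id ?_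
    filter_upwards with y
    have : (∫ s in y..t, ‖Real.exp (κ * (s - t))‖) = ∫ s in y..t, Real.exp (κ * (s - t)) := by
      congr 1; ext s; exact Real.norm_of_nonneg (Real.exp_pos _).le
    rw [this, hint y]
    have := (Real.exp_pos (κ * (y - t))).le
    have hκ' := hκ.le
    nlinarith [div_nonneg this hκ']
  refine ⟨hIntOn, ?_⟩
  refine tendsto_nhds_unique
    (intervalIntegral_tendsto_integral_Iic t hIntOn Filter.tendsto_id) ?_
  have h1 : Filter.Tendsto (fun y : ℝ => κ * (y - t)) Filter.atBot Filter.atBot := by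
    apply Filter.Tendsto.const_mul_atBot hκ
    exact Filter.tendsto_atBot_add_const_right _ _ Filter.tendsto_id
  have h2 : Filter.Tendsto (fun y : ℝ => Real.exp (κ * (y - t)) / κ) Filter.atBot (nhds 0) := by
    simpa using (Real.tendsto_exp_atBot.comp h1).div_const κ
  have := (tendsto_const_nhds (x := 1 / κ) (f := Filter.atBot)).sub h2
  simp only [sub_zero] at this
  exact Filter.Tendsto.congr (fun y => (hint y).symm) this

/-- Under the contraction hypotheses on the Picard map
(𝒢z)(t) = ∫_{-∞}^t e^{A(t-s)}[F(z(s)) + G(z(s),s)] ds, together with the self-map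
condition (K/κ)(sup_t‖G(0,t)‖ + ‖F‖_{∞,δ}) + (K/κ)·2δ(L_F+L_G) ≤ δ, the map 𝒢 sends
C_δ into itself and has a unique fixed point z* ∈ C_δ, which is a uniformly bounded
solution of ż = Az + F(z) + G(z,t). -/
theorem stmt5 {n : ℕ} (A : (Fin n → ℝ) →L[ℝ] (Fin n → ℝ))
    (K κ δ LF LG a MF MG : ℝ) (hK : 0 < K) (hκ : 0 < κ) (hδ : 0 < δ)
    (hLF : 0 ≤ LF) (hLG : 0 ≤ LG)
    (hA : ∀ t : ℝ, 0 ≤ t → ‖NormedSpace.exp (t • A)‖ ≤ K * Real.exp (-κ * t))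
    (F : (Fin n → ℝ) → (Fin n → ℝ)) (G : (Fin n → ℝ) → ℝ → (Fin n → ℝ))
    (hFcont : Continuous F) (hGcont : Continuous fun p : (Fin n → ℝ) × ℝ => G p.1 p.2)
    (hF0 : F 0 = 0)
    (hF : ∀ x y : Fin n → ℝ, ‖x‖ ≤ δ → ‖y‖ ≤ δ → ‖F x - F y‖ ≤ LF * ‖x - y‖)
    (hG : ∀ (x y : Fin n → ℝ) (t : ℝ), ‖x‖ ≤ δ → ‖y‖ ≤ δ →
      ‖G x t - G y t‖ ≤ LG * ‖x - y‖)
    (hMF : ∀ x : Fin n → ℝ, ‖x‖ ≤ δ → ‖F x‖ ≤ MF)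
    (hMG : ∀ t : ℝ, ‖G 0 t‖ ≤ MG)
    (ha : K / κ * (LF + LG) ≤ a) (ha1 : a < 1)
    (hself : K / κ * (MG + MF) + K / κ * (2 * δ * (LF + LG)) ≤ δ) :
    (∀ w : ℝ → Fin n → ℝ, Continuous w → (∀ t, ‖w t‖ ≤ δ) →
      Continuous (fun t => ∫ s in Set.Iic t,
          NormedSpace.exp ((t - s) • A) (F (w s) + G (w s) s)) ∧
      ∀ t : ℝ, ‖∫ s in Set.Iic t,
          NormedSpace.exp ((t - s) • A) (F (w s) + G (w s) s)‖ ≤ δ) ∧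
    ∃ zs : ℝ → Fin n → ℝ,
      (Continuous zs ∧ (∀ t, ‖zs t‖ ≤ δ) ∧
        (∀ t : ℝ, (∫ s in Set.Iic t,
            NormedSpace.exp ((t - s) • A) (F (zs s) + G (zs s) s)) = zs t) ∧
        ∀ t : ℝ, HasDerivAt zs (A (zs t) + F (zs t) + G (zs t) t) t) ∧
      ∀ w : ℝ → Fin n → ℝ, Continuous w → (∀ t, ‖w t‖ ≤ δ) →
        (∀ t : ℝ, (∫ s in Set.Iic t,
            NormedSpace.exp ((t - s) • A) (F (w s) + G (w s) s)) = w t) →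
        w = zs := by
  let +nondep : NormedAlgebra ℚ ((Fin n → ℝ) →L[ℝ] (Fin n → ℝ)) := .restrictScalars ℚ ℝ _
  have hκK : 0 ≤ K / κ := by positivity
  have hMF0 : 0 ≤ MF := by
    have := hMF 0 (by simp [hδ.le])
    rw [hF0] at this; simpa using this
  have hMG0 : 0 ≤ MG := (norm_nonneg _).trans (hMG 0)
  have ha0 : 0 ≤ a := le_trans (by positivity) ha
  -- norm bound on the nonlinearity
  have hbound : ∀ w : ℝ → Fin n → ℝ, (∀ s, ‖w s‖ ≤ δ) →
      ∀ s : ℝ, ‖F (w s) + G (w s) s‖ ≤ MF + (MG + LG * δ) := by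
    intro w hw s
    have h1 : ‖F (w s)‖ ≤ MF := hMF _ (hw s)
    have h2 : ‖G (w s) s‖ ≤ LG * δ + MG := by
      have h3 := hG (w s) 0 s (hw s) (by simp [hδ.le])
      have h4 := hMG s
      have h5 : ‖G (w s) s‖ ≤ ‖G (w s) s - G 0 s‖ + ‖G 0 s‖ := by
        have := norm_add_le (G (w s) s - G 0 s) (G 0 s)
        rwa [sub_add_cancel] at this
      have h6 : LG * ‖w s - 0‖ ≤ LG * δ := by
        rw [sub_zero]; exact mul_le_mul_of_nonneg_left (hw s) hLG
      linarith
    calc ‖F (w s) + G (w s) s‖ ≤ ‖F (w s)‖ + ‖G (w s) s‖ := norm_add_le _ _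
      _ ≤ MF + (MG + LG * δ) := by linarith
  -- key integrability and norm estimate for the Picard integrand
  have key1 : ∀ (g : ℝ → Fin n → ℝ) (C : ℝ), Continuous g → (∀ s, ‖g s‖ ≤ C) → ∀ t : ℝ,
      IntegrableOn (fun s => NormedSpace.exp ((t - s) • A) (g s)) (Set.Iic t) ∧
      ‖∫ s in Set.Iic t, NormedSpace.exp ((t - s) • A) (g s)‖ ≤ K / κ * C := by
    intro g C hg hgC t
    have hC0 : 0 ≤ C := (norm_nonneg _).trans (hgC 0)
    have hcontI : Continuous fun s => NormedSpace.exp ((t - s) • A) (g s) :=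
      (NormedSpace.exp_continuous.comp
        ((continuous_const.sub continuous_id).smul continuous_const)).clm_apply hg
    have hptbd : ∀ s ∈ Set.Iic t, ‖NormedSpace.exp ((t - s) • A) (g s)‖ ≤
        K * C * Real.exp (κ * (s - t)) := by
      intro s hs
      have h0 : (0:ℝ) ≤ t - s := by simpa using hs
      have h1 : ‖NormedSpace.exp ((t - s) • A)‖ ≤ K * Real.exp (κ * (s - t)) := by
        have := hA (t - s) h0
        have he : -κ * (t - s) = κ * (s - t) := by ring
        rwa [he] at this
      calc ‖NormedSpace.exp ((t - s) • A) (g s)‖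
          ≤ ‖NormedSpace.exp ((t - s) • A)‖ * ‖g s‖ := ContinuousLinearMap.le_opNorm _ _
        _ ≤ (K * Real.exp (κ * (s - t))) * C :=
            mul_le_mul h1 (hgC s) (norm_nonneg _) (by positivity)
        _ = K * C * Real.exp (κ * (s - t)) := by ring
    have hbd_int : IntegrableOn (fun s => K * C * Real.exp (κ * (s - t))) (Set.Iic t) :=
      (expAux hκ t).1.const_mul (K * C)
    have hint : IntegrableOn (fun s => NormedSpace.exp ((t - s) • A) (g s)) (Set.Iic t) := by
      refine Integrable.mono' hbd_int hcontI.aestronglyMeasurable ?_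
      filter_upwards [ae_restrict_mem measurableSet_Iic] with s hs
      exact hptbd s hs
    refine ⟨hint, ?_⟩
    have hnorm : ‖∫ s in Set.Iic t, NormedSpace.exp ((t - s) • A) (g s)‖ ≤
        ∫ s in Set.Iic t, K * C * Real.exp (κ * (s - t)) := by
      refine norm_integral_le_of_norm_le hbd_int ?_
      filter_upwards [ae_restrict_mem measurableSet_Iic] with s hs
      exact hptbd s hs
    rw [integral_const_mul, (expAux hκ t).2] at hnorm
    calc ‖∫ s in Set.Iic t, NormedSpace.exp ((t - s) • A) (g s)‖
        ≤ K * C * (1 / κ) := hnorm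
      _ = K / κ * C := by ring
  -- continuity of the nonlinearity along a continuous curve
  have hhcont : ∀ w : ℝ → Fin n → ℝ, Continuous w →
      Continuous fun s => F (w s) + G (w s) s := by
    intro w hw
    exact (hFcont.comp hw).add (hGcont.comp (hw.prodMk continuous_id))
  -- rewriting lemma and integrability of exp((-s)A)(g s)
  have keyrw : ∀ (g : ℝ → Fin n → ℝ) (C : ℝ), Continuous g → (∀ s, ‖g s‖ ≤ C) → ∀ t : ℝ,
      IntegrableOn (fun s => NormedSpace.exp ((-s) • A) (g s)) (Set.Iic t) ∧
      (∫ s in Set.Iic t, NormedSpace.exp ((t - s) • A) (g s)) =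
        NormedSpace.exp (t • A) (∫ s in Set.Iic t, NormedSpace.exp ((-s) • A) (g s)) := by
    intro g C hg hgC t
    have hC0 : 0 ≤ C := (norm_nonneg _).trans (hgC 0)
    have hcont2 : Continuous fun s => NormedSpace.exp ((-s) • A) (g s) :=
      (NormedSpace.exp_continuous.comp (continuous_neg.smul continuous_const)).clm_apply hg
    have h1 : IntegrableOn (fun s => NormedSpace.exp ((-s) • A) (g s)) (Set.Iic (min t 0)) := by
      have hb0 : IntegrableOn (fun s => K * C * Real.exp (κ * (s - 0))) (Set.Iic (0:ℝ)) :=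
        (expAux hκ (0:ℝ)).1.const_mul (K * C)
      refine Integrable.mono'
        (hb0.mono_set (Set.Iic_subset_Iic.2 (min_le_right t 0)))
        hcont2.aestronglyMeasurable ?_
      filter_upwards [ae_restrict_mem measurableSet_Iic] with s hs
      have hs0 : s ≤ 0 := le_trans hs (min_le_right t 0)
      have h2 : ‖NormedSpace.exp ((-s) • A)‖ ≤ K * Real.exp (κ * (s - 0)) := by
        have := hA (-s) (by linarith)
        have he : -κ * -s = κ * (s - 0) := by ring
        rwa [he] at this
      calc ‖NormedSpace.exp ((-s) • A) (g s)‖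
          ≤ ‖NormedSpace.exp ((-s) • A)‖ * ‖g s‖ := ContinuousLinearMap.le_opNorm _ _
        _ ≤ (K * Real.exp (κ * (s - 0))) * C :=
            mul_le_mul h2 (hgC s) (norm_nonneg _) (by positivity)
        _ = K * C * Real.exp (κ * (s - 0)) := by ring
    have h2 : IntegrableOn (fun s => NormedSpace.exp ((-s) • A) (g s))
        (Set.Icc (min t 0) t) := hcont2.integrableOn_Icc
    have hsub : Set.Iic t ⊆ Set.Iic (min t 0) ∪ Set.Icc (min t 0) t := by
      intro s hs
      rcases le_or_gt s (min t 0) with h | h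
      · exact Or.inl h
      · exact Or.inr ⟨h.le, hs⟩
    have hint : IntegrableOn (fun s => NormedSpace.exp ((-s) • A) (g s)) (Set.Iic t) :=
      (h1.union h2).mono_set hsub
    refine ⟨hint, ?_⟩
    have hrw : ∀ s : ℝ, NormedSpace.exp ((t - s) • A) (g s) =
        NormedSpace.exp (t • A) (NormedSpace.exp ((-s) • A) (g s)) := by
      intro s
      have hc : Commute (t • A) ((-s) • A) := ((Commute.refl A).smul_left t).smul_right (-s)
      have he : (t - s) • A = t • A + (-s) • A := by
        rw [← add_smul]; ring_nf
      rw [he, NormedSpace.exp_add_of_commute hc, ContinuousLinearMap.mul_apply]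
    simp_rw [hrw]
    exact ContinuousLinearMap.integral_comp_comm _ hint
  -- derivative of the inner integral
  have keyY : ∀ (g : ℝ → Fin n → ℝ) (C : ℝ), Continuous g → (∀ s, ‖g s‖ ≤ C) → ∀ t : ℝ,
      HasDerivAt (fun u => ∫ s in Set.Iic u, NormedSpace.exp ((-s) • A) (g s))
        (NormedSpace.exp ((-t) • A) (g t)) t := by
    intro g C hg hgC t
    have hcont2 : Continuous fun s => NormedSpace.exp ((-s) • A) (g s) :=
      (NormedSpace.exp_continuous.comp (continuous_neg.smul continuous_const)).clm_apply hg
    have hrepr : ∀ u : ℝ, (∫ s in Set.Iic u, NormedSpace.exp ((-s) • A) (g s)) =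
        (∫ s in (0:ℝ)..u, NormedSpace.exp ((-s) • A) (g s)) +
          ∫ s in Set.Iic (0:ℝ), NormedSpace.exp ((-s) • A) (g s) := by
      intro u
      have := intervalIntegral.integral_Iic_sub_Iic
        ((keyrw g C hg hgC 0).1) ((keyrw g C hg hgC u).1)
      rw [← this]; abel
    have h1 : HasDerivAt (fun u => (∫ s in (0:ℝ)..u, NormedSpace.exp ((-s) • A) (g s)) +
          ∫ s in Set.Iic (0:ℝ), NormedSpace.exp ((-s) • A) (g s))
        (NormedSpace.exp ((-t) • A) (g t)) t :=
      ((hcont2.integral_hasStrictDerivAt 0 t).hasDerivAt).add_const _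
    exact h1.congr_of_eventuallyEq (Filter.Eventually.of_forall hrepr)
  -- Part 1 : self map
  have part1 : ∀ w : ℝ → Fin n → ℝ, Continuous w → (∀ t, ‖w t‖ ≤ δ) →
      Continuous (fun t => ∫ s in Set.Iic t,
          NormedSpace.exp ((t - s) • A) (F (w s) + G (w s) s)) ∧
      ∀ t : ℝ, ‖∫ s in Set.Iic t,
          NormedSpace.exp ((t - s) • A) (F (w s) + G (w s) s)‖ ≤ δ := by
    intro w hwc hwb
    have hgc := hhcont w hwc
    have hgb := hbound w hwb
    constructor
    · have hYc : Continuous fun u => ∫ s in Set.Iic u,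
          NormedSpace.exp ((-s) • A) (F (w s) + G (w s) s) := by
        rw [continuous_iff_continuousAt]
        exact fun t => (keyY _ _ hgc hgb t).continuousAt
      have hc : Continuous fun t => NormedSpace.exp (t • A)
          (∫ s in Set.Iic t, NormedSpace.exp ((-s) • A) (F (w s) + G (w s) s)) :=
        (NormedSpace.exp_continuous.comp (continuous_id.smul continuous_const)).clm_apply hYc
      exact hc.congr fun t => ((keyrw _ _ hgc hgb t).2).symm
    · intro t
      have h1 := (key1 _ _ hgc hgb t).2
      have h2 : LG * δ ≤ 2 * δ * (LF + LG) := by nlinarith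
      have h3 := mul_le_mul_of_nonneg_left h2 hκK
      nlinarith [h1, h3, hself]
  refine ⟨part1, ?_⟩
  -- the complete metric space of curves bounded by δ
  set S : Set (BoundedContinuousFunction ℝ (Fin n → ℝ)) := {f | ∀ t, ‖f t‖ ≤ δ} with hS
  have hSclosed : IsClosed S := by
    have : S = ⋂ t : ℝ, {f : BoundedContinuousFunction ℝ (Fin n → ℝ) | ‖f t‖ ≤ δ} := by
      ext f; simp [hS, Set.mem_iInter]
    rw [this]
    exact isClosed_iInter fun t =>
      isClosed_le ((continuous_eval_const t).norm) continuous_const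
  haveI : CompleteSpace S := hSclosed.completeSpace_coe
  haveI : Nonempty S := ⟨⟨0, fun t => by simp [hδ.le]⟩⟩
  -- the Picard map
  set Φ : S → S := fun f =>
    ⟨BoundedContinuousFunction.ofNormedAddCommGroup
      (fun t => ∫ s in Set.Iic t, NormedSpace.exp ((t - s) • A) (F (f.1 s) + G (f.1 s) s))
      (part1 f.1 f.1.continuous f.2).1 δ (part1 f.1 f.1.continuous f.2).2,
      fun t => by
        simpa [BoundedContinuousFunction.coe_ofNormedAddCommGroup] using
          (part1 f.1 f.1.continuous f.2).2 t⟩ with hΦ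
  -- contraction estimate
  have key2 : ∀ (x y : S) (t : ℝ),
      ‖(Φ x).1 t - (Φ y).1 t‖ ≤ K / κ * ((LF + LG) * dist x.1 y.1) := by
    intro x y t
    have hxc := x.1.continuous; have hyc := y.1.continuous
    have hgd : Continuous fun s =>
        (F (x.1 s) + G (x.1 s) s) - (F (y.1 s) + G (y.1 s) s) :=
      (hhcont _ hxc).sub (hhcont _ hyc)
    have hD : ∀ s : ℝ, ‖(F (x.1 s) + G (x.1 s) s) - (F (y.1 s) + G (y.1 s) s)‖ ≤
        (LF + LG) * dist x.1 y.1 := by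
      intro s
      have hxy : ‖x.1 s - y.1 s‖ ≤ dist x.1 y.1 := by
        rw [← dist_eq_norm]; exact BoundedContinuousFunction.dist_coe_le_dist s
      have h1 := hF (x.1 s) (y.1 s) (x.2 s) (y.2 s)
      have h2 := hG (x.1 s) (y.1 s) s (x.2 s) (y.2 s)
      have he : (F (x.1 s) + G (x.1 s) s) - (F (y.1 s) + G (y.1 s) s) =
          (F (x.1 s) - F (y.1 s)) + (G (x.1 s) s - G (y.1 s) s) := by abel
      rw [he]
      calc ‖(F (x.1 s) - F (y.1 s)) + (G (x.1 s) s - G (y.1 s) s)‖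
          ≤ ‖F (x.1 s) - F (y.1 s)‖ + ‖G (x.1 s) s - G (y.1 s) s‖ := norm_add_le _ _
        _ ≤ LF * ‖x.1 s - y.1 s‖ + LG * ‖x.1 s - y.1 s‖ := add_le_add h1 h2
        _ = (LF + LG) * ‖x.1 s - y.1 s‖ := by ring
        _ ≤ (LF + LG) * dist x.1 y.1 :=
            mul_le_mul_of_nonneg_left hxy (by positivity)
    have hsplit : (Φ x).1 t - (Φ y).1 t = ∫ s in Set.Iic t,
        NormedSpace.exp ((t - s) • A)
          ((F (x.1 s) + G (x.1 s) s) - (F (y.1 s) + G (y.1 s) s)) := by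
      have hix := (key1 _ _ (hhcont _ hxc) (hbound _ x.2) t).1
      have hiy := (key1 _ _ (hhcont _ hyc) (hbound _ y.2) t).1
      have : (Φ x).1 t = ∫ s in Set.Iic t,
          NormedSpace.exp ((t - s) • A) (F (x.1 s) + G (x.1 s) s) := rfl
      rw [this]
      have : (Φ y).1 t = ∫ s in Set.Iic t,
          NormedSpace.exp ((t - s) • A) (F (y.1 s) + G (y.1 s) s) := rfl
      rw [this, ← integral_sub hix hiy]
      congr 1; ext s; rw [← map_sub]
    rw [hsplit]
    exact (key1 _ _ hgd hD t).2
  have hcontract : ContractingWith ⟨a, ha0⟩ Φ := by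
    constructor
    · exact_mod_cast ha1
    · refine LipschitzWith.of_dist_le_mul fun x y => ?_
      rw [Subtype.dist_eq]
      refine (BoundedContinuousFunction.dist_le ?_).2 fun t => ?_
      · have : (0:ℝ) ≤ dist x y := dist_nonneg
        have : dist x.1 y.1 = dist x y := (Subtype.dist_eq x y).symm
        positivity
      · rw [dist_eq_norm]
        calc ‖(Φ x).1 t - (Φ y).1 t‖ ≤ K / κ * ((LF + LG) * dist x.1 y.1) := key2 x y t
          _ = (K / κ * (LF + LG)) * dist x.1 y.1 := by ring
          _ ≤ a * dist x.1 y.1 := mul_le_mul_of_nonneg_right ha dist_nonneg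
          _ = (⟨a, ha0⟩ : NNReal) * dist x y := by rw [Subtype.dist_eq]
  set z0 : S := ContractingWith.fixedPoint Φ hcontract with hz0
  have hfixS : Φ z0 = z0 := hcontract.fixedPoint_isFixedPt
  set zs : ℝ → Fin n → ℝ := fun t => z0.1 t with hzs
  have hzsc : Continuous zs := z0.1.continuous
  have hzsb : ∀ t, ‖zs t‖ ≤ δ := z0.2
  have hfix : ∀ t : ℝ, (∫ s in Set.Iic t,
      NormedSpace.exp ((t - s) • A) (F (zs s) + G (zs s) s)) = zs t := by
    intro t
    have := congrArg (fun f : S => f.1 t) hfixS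
    simpa [hΦ, hzs, BoundedContinuousFunction.coe_ofNormedAddCommGroup] using this
  have hgc := hhcont zs hzsc
  have hgb := hbound zs hzsb
  -- the derivative
  have hderiv : ∀ t : ℝ, HasDerivAt zs (A (zs t) + F (zs t) + G (zs t) t) t := by
    intro t
    set Y : ℝ → Fin n → ℝ := fun u => ∫ s in Set.Iic u,
      NormedSpace.exp ((-s) • A) (F (zs s) + G (zs s) s) with hY
    have hrepr : ∀ u : ℝ, zs u = NormedSpace.exp (u • A) (Y u) := by
      intro u
      rw [← hfix u, (keyrw _ _ hgc hgb u).2]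
    have hYd : HasDerivAt Y (NormedSpace.exp ((-t) • A) (F (zs t) + G (zs t) t)) t :=
      keyY _ _ hgc hgb t
    have hBd : HasDerivAt (fun u : ℝ => NormedSpace.exp (u • A))
        (A * NormedSpace.exp (t • A)) t := hasDerivAt_exp_smul_const' A t
    have hprod := hBd.clm_apply hYd
    have hsimp : (A * NormedSpace.exp (t • A)) (Y t) +
        NormedSpace.exp (t • A) (NormedSpace.exp ((-t) • A) (F (zs t) + G (zs t) t)) =
        A (zs t) + F (zs t) + G (zs t) t := by
      have h1 : (A * NormedSpace.exp (t • A)) (Y t) = A (zs t) := by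
        rw [ContinuousLinearMap.mul_apply, ← hrepr t]
      have hc : Commute (t • A) ((-t) • A) := ((Commute.refl A).smul_left t).smul_right (-t)
      have h2 : NormedSpace.exp (t • A) (NormedSpace.exp ((-t) • A)
          (F (zs t) + G (zs t) t)) = F (zs t) + G (zs t) t := by
        rw [← ContinuousLinearMap.mul_apply, ← NormedSpace.exp_add_of_commute hc]
        have he : t • A + (-t) • A = (0:ℝ) • A := by rw [← add_smul]; ring_nf
        rw [he, zero_smul, NormedSpace.exp_zero, ContinuousLinearMap.one_apply]
      rw [h1, h2, add_assoc]
    rw [hsimp] at hprod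
    exact hprod.congr_of_eventuallyEq (Filter.Eventually.of_forall hrepr)
  refine ⟨zs, ⟨hzsc, hzsb, hfix, hderiv⟩, ?_⟩
  -- uniqueness
  intro w hwc hwb hwfix
  set W : S := ⟨BoundedContinuousFunction.ofNormedAddCommGroup w hwc δ hwb,
    fun t => by simpa [BoundedContinuousFunction.coe_ofNormedAddCommGroup] using hwb t⟩ with hW
  have hWfix : Φ W = W := by
    refine Subtype.ext (BoundedContinuousFunction.ext fun t => ?_)
    simpa [hΦ, hW, BoundedContinuousFunction.coe_ofNormedAddCommGroup] using hwfix t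
  have : W = z0 := hcontract.fixedPoint_unique hWfix
  funext t
  have := congrArg (fun f : S => f.1 t) this
  simpa [hW, hzs, BoundedContinuousFunction.coe_ofNormedAddCommGroup] using this
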